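/- Let K be a p×n real matrix and define K₁ = { y ∈ ℝ^{n×n} : y ≥ 0 entrywise, Σ_{i,i'} y_{(i,i')} = 1, and every row and every column v of y satisfies K·vᵀ ≥ 0 entrywise }, and f'(y) = Σ_{i=1}^{n} y_{(i,i)}. Fix an integer q ≥ 2 and, for each i ∈ {1,…,n}, nonnegative reals f_i(0), …, f_i(q−1) with Σ_{k=0}^{q−1} f_i(k) = 1; set x_i = Σ_{k=1}^{q−1} f_i(k), and define S = 2 Σ_{i=1}^{n} ( 1 − Σ_{k=0}^{q−1} f_i(k) cos(2πk/q) ) and V = Σ_{i=1}^{n} ( Σ_{k=0}^{q−1} f_i(k)² + 2 Σ_{0≤k<ℓ≤q−1} f_i(k) f_i(ℓ) cos(2π(k−ℓ)/q) − 2 Σ_{k=0}^{q−1} f_i(k) cos(2πk/q) + 1 ). Assume V > 0 and K·xᵀ ≥ 0 entrywise, and let μ = sup { f'(y) : y ∈ K₁ }. Then μ > 0 and S²/V ≥ (1 − cos(2π/q))² / μ. -/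

import Mathlib

open Finset Matrix Real

private lemma sum_sym_decomp (m : ℕ) (g : ℕ → ℕ → ℝ) (hg : ∀ k l, g k l = g l k) :
    ∑ l ∈ Finset.range m, ∑ k ∈ Finset.range m, g k l
      = ∑ k ∈ Finset.range m, g k k
        + 2 * ∑ l ∈ Finset.range m, ∑ k ∈ Finset.range l, g k l := by
  induction m with
  | zero => simp
  | succ n ih =>
    have hsym : ∑ l ∈ Finset.range n, g n l = ∑ k ∈ Finset.range n, g k n :=
      Finset.sum_congr rfl fun l _ => hg n l
    simp only [Finset.sum_range_succ, Finset.sum_add_distrib] at *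
    linarith

private lemma cos_le_aux (q k : ℕ) (hq : 2 ≤ q) (hk1 : 1 ≤ k) (hk : k < q) :
    Real.cos (2 * π * k / q) ≤ Real.cos (2 * π / q) := by
  have hq0 : (0:ℝ) < q := by positivity
  have ha0 : 0 < 2 * π / q := by positivity
  have haπ : 2 * π / q ≤ π := by
    rw [div_le_iff₀ hq0]
    have : (2:ℝ) ≤ q := by exact_mod_cast hq
    nlinarith [Real.pi_pos]
  have hk1' : (1:ℝ) ≤ k := by exact_mod_cast hk1
  have hkq : (k:ℝ) ≤ q - 1 := by
    have : (k:ℝ) + 1 ≤ q := by exact_mod_cast hk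
    linarith
  have hlow : 2 * π / q ≤ 2 * π * k / q := by
    apply div_le_div_of_nonneg_right ?_ (le_of_lt hq0) |>.trans_eq rfl
    nlinarith [Real.pi_pos]
  have hhigh : 2 * π * k / q ≤ 2 * π - 2 * π / q := by
    rw [div_le_iff₀ hq0, sub_mul]
    rw [div_mul_cancel₀ _ (ne_of_gt hq0)]
    nlinarith [Real.pi_pos]
  by_cases hcase : 2 * π * k / q ≤ π
  · exact Real.cos_le_cos_of_nonneg_of_le_pi (le_of_lt ha0) hcase hlow
  · push_neg at hcase
    have : Real.cos (2 * π * k / q) = Real.cos (2 * π - 2 * π * k / q) := by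
      rw [Real.cos_two_pi_sub]
    rw [this]
    apply Real.cos_le_cos_of_nonneg_of_le_pi (le_of_lt ha0)
    · linarith
    · linarith

private lemma Vi_eq (q : ℕ) (f : ℕ → ℝ) :
    ∑ k ∈ Finset.range q, (f k) ^ 2
        + 2 * ∑ l ∈ Finset.range q, ∑ k ∈ Finset.range l,
            f k * f l * Real.cos (2 * π * ((k : ℝ) - l) / q)
        - 2 * ∑ k ∈ Finset.range q, f k * Real.cos (2 * π * k / q) + 1
      = Complex.normSq (1 - ∑ k ∈ Finset.range q,
          (f k : ℂ) * Complex.exp ((2 * π * k / q : ℝ) * Complex.I)) := by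
  have hre : ∀ k : ℕ, ((f k : ℂ) * Complex.exp ((2 * π * k / q : ℝ) * Complex.I)).re
      = f k * Real.cos (2 * π * k / q) := by
    intro k
    rw [Complex.re_ofReal_mul, Complex.exp_ofReal_mul_I_re]
  have him : ∀ k : ℕ, ((f k : ℂ) * Complex.exp ((2 * π * k / q : ℝ) * Complex.I)).im
      = f k * Real.sin (2 * π * k / q) := by
    intro k
    rw [Complex.im_ofReal_mul, Complex.exp_ofReal_mul_I_im]
  set A := ∑ k ∈ Finset.range q, f k * Real.cos (2 * π * k / q) with hA
  set B := ∑ k ∈ Finset.range q, f k * Real.sin (2 * π * k / q) with hB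
  have h1 : Complex.normSq (1 - ∑ k ∈ Finset.range q,
      (f k : ℂ) * Complex.exp ((2 * π * k / q : ℝ) * Complex.I)) = (1 - A)^2 + B^2 := by
    rw [Complex.normSq_apply]
    simp only [Complex.sub_re, Complex.sub_im, Complex.one_re, Complex.one_im,
      Complex.re_sum, Complex.im_sum]
    simp only [hre, him, ← hA, ← hB]
    ring
  have h2 : A^2 + B^2 = ∑ l ∈ Finset.range q, ∑ k ∈ Finset.range q,
      f k * f l * Real.cos (2 * π * ((k : ℝ) - l) / q) := by
    rw [hA, hB, sq, sq, Finset.sum_mul_sum, Finset.sum_mul_sum, ← Finset.sum_add_distrib]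
    apply Finset.sum_congr rfl; intro l _
    rw [← Finset.sum_add_distrib]
    apply Finset.sum_congr rfl; intro k _
    have : 2 * π * ((k : ℝ) - l) / q = 2 * π * k / q - 2 * π * l / q := by ring
    rw [this, Real.cos_sub]
    ring
  have h3 : ∑ l ∈ Finset.range q, ∑ k ∈ Finset.range q,
      f k * f l * Real.cos (2 * π * ((k : ℝ) - l) / q)
      = ∑ k ∈ Finset.range q, (f k)^2
        + 2 * ∑ l ∈ Finset.range q, ∑ k ∈ Finset.range l,
            f k * f l * Real.cos (2 * π * ((k : ℝ) - l) / q) := by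
    rw [sum_sym_decomp q _ (fun k l => by
      have : 2 * π * ((k : ℝ) - l) / q = -(2 * π * ((l : ℝ) - k) / q) := by ring
      rw [this, Real.cos_neg]; ring)]
    congr 1
    apply Finset.sum_congr rfl; intro k _
    simp [sq]
  rw [h1]
  have : (1 - A)^2 + B^2 = 1 - 2*A + (A^2 + B^2) := by ring
  rw [this, h2, h3]
  ring

private lemma normSq_le_bound (q : ℕ) (hq : 1 ≤ q) (f : ℕ → ℝ) (hf0 : ∀ k < q, 0 ≤ f k)
    (hf1 : ∑ k ∈ Finset.range q, f k = 1) :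
    Complex.normSq (1 - ∑ k ∈ Finset.range q,
        (f k : ℂ) * Complex.exp ((2 * π * k / q : ℝ) * Complex.I))
      ≤ 4 * (∑ k ∈ Finset.Ico 1 q, f k) ^ 2 := by
  set e : ℕ → ℂ := fun k => Complex.exp ((2 * π * k / q : ℝ) * Complex.I) with he
  have hz : (1 : ℂ) - ∑ k ∈ Finset.range q, (f k : ℂ) * e k
      = ∑ k ∈ Finset.Ico 1 q, (f k : ℂ) * (1 - e k) := by
    have h1 : (1 : ℂ) = ∑ k ∈ Finset.range q, (f k : ℂ) := by
      rw [← Complex.ofReal_sum, hf1, Complex.ofReal_one]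
    have hsplit : Finset.range q = insert 0 (Finset.Ico 1 q) := by
      ext a
      simp only [Finset.mem_range, Finset.mem_insert, Finset.mem_Ico]
      omega
    have he0 : e 0 = 1 := by
      simp [he]
    conv_lhs => rw [h1, hsplit, Finset.sum_insert (by simp), Finset.sum_insert (by simp)]
    rw [he0]
    have : ∑ k ∈ Finset.Ico 1 q, (f k : ℂ) * (1 - e k)
        = ∑ k ∈ Finset.Ico 1 q, ((f k : ℂ) - (f k : ℂ) * e k) :=
      Finset.sum_congr rfl fun k _ => by ring
    rw [this, Finset.sum_sub_distrib]
    ring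
  have hnorm : ‖(1 : ℂ) - ∑ k ∈ Finset.range q, (f k : ℂ) * e k‖
      ≤ 2 * ∑ k ∈ Finset.Ico 1 q, f k := by
    rw [hz]
    calc ‖∑ k ∈ Finset.Ico 1 q, (f k : ℂ) * (1 - e k)‖
        ≤ ∑ k ∈ Finset.Ico 1 q, ‖(f k : ℂ) * (1 - e k)‖ := norm_sum_le _ _
      _ ≤ ∑ k ∈ Finset.Ico 1 q, f k * 2 := by
          apply Finset.sum_le_sum; intro k hk
          rw [norm_mul, Complex.norm_real, Real.norm_of_nonneg (hf0 k (Finset.mem_Ico.mp hk).2)]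
          apply mul_le_mul_of_nonneg_left _ (hf0 k (Finset.mem_Ico.mp hk).2)
          calc ‖(1 : ℂ) - e k‖ ≤ ‖(1:ℂ)‖ + ‖e k‖ := norm_sub_le _ _
            _ = 2 := by
                rw [norm_one, he]
                simp only []
                rw [Complex.norm_exp_ofReal_mul_I]
                norm_num
      _ = 2 * ∑ k ∈ Finset.Ico 1 q, f k := by rw [← Finset.sum_mul]; ring
  have hns := Complex.normSq_eq_norm_sq (1 - ∑ k ∈ Finset.range q, (f k : ℂ) * e k)
  rw [hns]
  have habs : ‖(1 : ℂ) - ∑ k ∈ Finset.range q, (f k : ℂ) * e k‖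
      = ‖(1 : ℂ) - ∑ k ∈ Finset.range q, (f k : ℂ) * e k‖ := rfl
  rw [habs]
  calc ‖(1 : ℂ) - ∑ k ∈ Finset.range q, (f k : ℂ) * e k‖ ^ 2
      ≤ (2 * ∑ k ∈ Finset.Ico 1 q, f k) ^ 2 := by
        apply pow_le_pow_left₀ (norm_nonneg _) hnorm
    _ = 4 * (∑ k ∈ Finset.Ico 1 q, f k) ^ 2 := by ring

/-- Linear-programming lower bound on the squared pseudodistance for `q`-ary PSK over
AWGN: let `K` be the matrix encoding the per-check pseudocodeword inequalities, `K₁`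
the polytope of entrywise-nonnegative `n × n` matrices with total entry sum `1` all of
whose rows and columns `v` satisfy `K v ≥ 0`, and `μ = sup { ∑_i y i i : y ∈ K₁ }`.
For any normalized pseudocodeword matrix `(f i k)` with `x_i = ∑_{1 ≤ k < q} f i k`
satisfying `K x ≥ 0` and `V > 0`, we have `μ > 0` and
`S²/V ≥ (1 − cos(2π/q))² / μ`. -/
theorem lp_lower_bound {p n q : ℕ} (hq : 2 ≤ q)
    (K : Matrix (Fin p) (Fin n) ℝ)
    (f : Fin n → ℕ → ℝ)
    (hf0 : ∀ i, ∀ k < q, 0 ≤ f i k)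
    (hf1 : ∀ i, ∑ k ∈ Finset.range q, f i k = 1)
    (x : Fin n → ℝ)
    (hx : ∀ i, x i = ∑ k ∈ Finset.Ico 1 q, f i k)
    (hKx : ∀ j, 0 ≤ (K *ᵥ x) j)
    (S V : ℝ)
    (hS : S = 2 * ∑ i, (1 - ∑ k ∈ Finset.range q, f i k * Real.cos (2 * π * k / q)))
    (hV : V = ∑ i, (∑ k ∈ Finset.range q, (f i k) ^ 2
        + 2 * ∑ l ∈ Finset.range q, ∑ k ∈ Finset.range l,
            f i k * f i l * Real.cos (2 * π * ((k : ℝ) - l) / q)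
        - 2 * ∑ k ∈ Finset.range q, f i k * Real.cos (2 * π * k / q) + 1))
    (hVpos : 0 < V)
    (K1 : Set (Matrix (Fin n) (Fin n) ℝ))
    (hK1 : K1 = {y | (∀ i i', 0 ≤ y i i') ∧
        (∑ i, ∑ i', y i i' = 1) ∧
        (∀ i, (∀ j, 0 ≤ (K *ᵥ (fun i' => y i i')) j) ∧
              (∀ j, 0 ≤ (K *ᵥ (fun i' => y i' i)) j))})
    (μ : ℝ)
    (hμ : μ = sSup ((fun y : Matrix (Fin n) (Fin n) ℝ => ∑ i, y i i) '' K1)) :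
    0 < μ ∧ S ^ 2 / V ≥ (1 - Real.cos (2 * π / q)) ^ 2 / μ := by
  have hx0 : ∀ i, 0 ≤ x i := fun i => by
    rw [hx]; exact Finset.sum_nonneg fun k hk => hf0 i k (Finset.mem_Ico.mp hk).2
  have hx1 : ∀ i, x i ≤ 1 := fun i => by
    rw [hx, ← hf1 i]
    apply Finset.sum_le_sum_of_subset_of_nonneg
    · intro k hk; exact Finset.mem_range.mpr (Finset.mem_Ico.mp hk).2
    · intro k hk _; exact hf0 i k (Finset.mem_range.mp hk)
  set T := ∑ i, (x i)^2 with hT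
  set X := ∑ i, x i with hX
  have hVT : V ≤ 4 * T := by
    rw [hV, hT, Finset.mul_sum]
    apply Finset.sum_le_sum
    intro i _
    rw [hx i]
    calc ∑ k ∈ Finset.range q, (f i k) ^ 2
        + 2 * ∑ l ∈ Finset.range q, ∑ k ∈ Finset.range l,
            f i k * f i l * Real.cos (2 * π * ((k : ℝ) - l) / q)
        - 2 * ∑ k ∈ Finset.range q, f i k * Real.cos (2 * π * k / q) + 1
        = Complex.normSq (1 - ∑ k ∈ Finset.range q,
            ((f i k : ℝ) : ℂ) * Complex.exp ((2 * π * k / q : ℝ) * Complex.I)) :=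
          Vi_eq q (f i)
      _ ≤ 4 * (∑ k ∈ Finset.Ico 1 q, f i k)^2 :=
          normSq_le_bound q (by omega) (f i) (hf0 i) (hf1 i)
  have hTpos : 0 < T := by linarith
  have hXT : T ≤ X := Finset.sum_le_sum fun i _ => by nlinarith [hx0 i, hx1 i]
  have hXpos : 0 < X := lt_of_lt_of_le hTpos hXT
  have h1cos : 0 ≤ 1 - Real.cos (2 * π / q) := by
    linarith [Real.cos_le_one (2 * π / q)]
  have hScos : 2 * (1 - Real.cos (2 * π / q)) * X ≤ S := by
    rw [hS, hX, mul_assoc, Finset.mul_sum]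
    apply mul_le_mul_of_nonneg_left _ (by norm_num : (0:ℝ) ≤ 2)
    apply Finset.sum_le_sum
    intro i _
    have heq : 1 - ∑ k ∈ Finset.range q, f i k * Real.cos (2 * π * k / q)
        = ∑ k ∈ Finset.range q, f i k * (1 - Real.cos (2 * π * k / q)) := by
      conv_lhs => rw [← hf1 i]
      rw [← Finset.sum_sub_distrib]
      apply Finset.sum_congr rfl; intro k _; ring
    rw [heq, hx i, Finset.mul_sum]
    calc ∑ k ∈ Finset.Ico 1 q, (1 - Real.cos (2 * π / q)) * f i k
        ≤ ∑ k ∈ Finset.Ico 1 q, f i k * (1 - Real.cos (2 * π * k / q)) := by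
          apply Finset.sum_le_sum; intro k hk
          have hmem := Finset.mem_Ico.mp hk
          have := cos_le_aux q k hq hmem.1 hmem.2
          rw [mul_comm]
          apply mul_le_mul_of_nonneg_left (by linarith) (hf0 i k hmem.2)
      _ ≤ ∑ k ∈ Finset.range q, f i k * (1 - Real.cos (2 * π * k / q)) := by
          apply Finset.sum_le_sum_of_subset_of_nonneg
          · intro k hk; exact Finset.mem_range.mpr (Finset.mem_Ico.mp hk).2
          · intro k hk _
            have hfk := hf0 i k (Finset.mem_range.mp hk)
            have := Real.cos_le_one (2 * π * k / q)
            apply mul_nonneg hfk (by linarith)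
  have hS0 : 0 ≤ S := le_trans (by positivity) hScos
  -- the witness matrix
  set y : Matrix (Fin n) (Fin n) ℝ := Matrix.of fun i i' => x i * x i' / X^2 with hy
  have hyK1 : y ∈ K1 := by
    rw [hK1]
    refine ⟨fun i i' => div_nonneg (mul_nonneg (hx0 i) (hx0 i')) (sq_nonneg X), ?_, ?_⟩
    · have hXne : X ≠ 0 := ne_of_gt hXpos
      have e1 : ∑ i : Fin n, ∑ i' : Fin n, x i * x i' / X^2
          = (∑ i : Fin n, x i) * (∑ i' : Fin n, x i') / X^2 := by
        rw [Finset.sum_mul_sum, Finset.sum_div]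
        exact Finset.sum_congr rfl fun i _ => by rw [Finset.sum_div]
      calc ∑ i, ∑ i', y i i' = ∑ i : Fin n, ∑ i' : Fin n, x i * x i' / X^2 := rfl
        _ = (∑ i : Fin n, x i) * (∑ i' : Fin n, x i') / X^2 := e1
        _ = X * X / X^2 := by rw [← hX]
        _ = 1 := by field_simp
    · intro i
      constructor
      · intro j
        have hrow : (fun i' => y i i') = (x i / X^2) • x := funext fun i' => by
          simp only [hy, Matrix.of_apply, Pi.smul_apply, smul_eq_mul]
          ring
        rw [hrow, Matrix.mulVec_smul]
        exact mul_nonneg (div_nonneg (hx0 i) (sq_nonneg X)) (hKx j)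
      · intro j
        have hcol : (fun i' => y i' i) = (x i / X^2) • x := funext fun i' => by
          simp only [hy, Matrix.of_apply, Pi.smul_apply, smul_eq_mul]
          ring
        rw [hcol, Matrix.mulVec_smul]
        exact mul_nonneg (div_nonneg (hx0 i) (sq_nonneg X)) (hKx j)
  have hydiag : ∑ i, y i i = T / X^2 := by
    calc ∑ i, y i i = ∑ i : Fin n, x i * x i / X^2 := rfl
      _ = (∑ i : Fin n, (x i)^2) / X^2 := by
          rw [Finset.sum_div]
          exact Finset.sum_congr rfl fun i _ => by ring
      _ = T / X^2 := by rw [hT]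
  have hbdd : BddAbove ((fun y : Matrix (Fin n) (Fin n) ℝ => ∑ i, y i i) '' K1) := by
    refine ⟨1, ?_⟩
    rintro r ⟨w, hw, rfl⟩
    rw [hK1] at hw
    obtain ⟨hw0, hw1, -⟩ := hw
    calc ∑ i, w i i ≤ ∑ i, ∑ i', w i i' :=
        Finset.sum_le_sum fun i _ =>
          Finset.single_le_sum (fun i' _ => hw0 i i') (Finset.mem_univ i)
      _ = 1 := hw1
  have hμge : T / X^2 ≤ μ := by
    rw [hμ]
    exact le_csSup hbdd ⟨y, hyK1, hydiag⟩
  have hτpos : 0 < T / X^2 := by positivity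
  have hμpos : 0 < μ := lt_of_lt_of_le hτpos hμge
  refine ⟨hμpos, ?_⟩
  rw [ge_iff_le]
  have h1 : (1 - Real.cos (2 * π / q))^2 / μ
      ≤ (1 - Real.cos (2 * π / q))^2 / (T / X^2) := by
    gcongr
  have h2 : (1 - Real.cos (2 * π / q))^2 / (T / X^2)
      = (1 - Real.cos (2 * π / q))^2 * X^2 / T := by
    rw [div_div_eq_mul_div]
  have h3 : (1 - Real.cos (2 * π / q))^2 * X^2 / T ≤ S^2 / V := by
    have hfour : (1 - Real.cos (2 * π / q))^2 * X^2 / T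
        = 4 * ((1 - Real.cos (2 * π / q))^2 * X^2) / (4 * T) := by
      rw [mul_div_mul_left _ _ (by norm_num : (4:ℝ) ≠ 0)]
    rw [hfour]
    apply div_le_div₀ (sq_nonneg S) ?_ hVpos hVT
    nlinarith [hScos, mul_nonneg (mul_nonneg (by norm_num : (0:ℝ) ≤ 2) h1cos) (le_of_lt hXpos)]
  calc (1 - Real.cos (2 * π / q))^2 / μ
      ≤ (1 - Real.cos (2 * π / q))^2 / (T / X^2) := h1
    _ = (1 - Real.cos (2 * π / q))^2 * X^2 / T := h2
    _ ≤ S^2 / V := h3
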